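/- (Necessity of species equivalence for ordinary lumpability.) Let R be a reaction network over a species type S and let ≈ be an equivalence relation on S with multiset lifting ≈ₗ. If ≈ₗ is an ordinarily lumpable partition of the continuous-time Markov chain of R on the full state space of multisets over S — that is, for all states σ, σ' with σ ≈ₗ σ' and every state τ, q[σ, {θ | θ ≈ₗ τ}] = q[σ', {θ | θ ≈ₗ τ}] — then ≈ is a species equivalence for R. -/

import Mathlib

open Classical

noncomputable section

/-- A reaction of a stochastic mass-action network:
reagent multiset, kinetic parameter, product multiset. -/
structure Reaction (S : Type*) where
  reag : Multiset S
  rate : ℝ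
  prod : Multiset S

variable {S : Type*}

/-- `classCount sd s σ` is the cumulative multiplicity in `σ` of the species in the
≈-equivalence class of `s` (every ≈-class is of this form). -/
def classCount (sd : Setoid S) (s : S) (σ : Multiset S) : ℕ :=
  (σ.filter (sd.r s)).card

/-- The multiset lifting `≈ₗ` of an equivalence relation `≈` on species:
two multisets are related iff they have the same cumulative multiplicity
of every ≈-equivalence class. -/
def mlift (sd : Setoid S) (σ σ' : Multiset S) : Prop :=
  ∀ s : S, classCount sd s σ = classCount sd s σ'

/-- Cumulative multiplicity in `σ` of an ≈-equivalence class given as an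
element of the quotient. -/
def classCountQ (sd : Setoid S) (H : Quotient sd) (σ : Multiset S) : ℕ :=
  (σ.filter (fun x => Quotient.mk sd x = H)).card

/-- The multiset lifting is itself an equivalence relation on multisets. -/
def mliftSetoid (sd : Setoid S) : Setoid (Multiset S) :=
  ⟨mlift sd, ⟨fun _ _ => rfl, fun h s => (h s).symm, fun h1 h2 s => (h1 s).trans (h2 s)⟩⟩

/-- The set of reagent multisets of a reaction network. -/
def Reags (R : Finset (Reaction S)) : Finset (Multiset S) := R.image Reaction.reag

/-- The set of product multisets of a reaction network. -/
def Prods (R : Finset (Reaction S)) : Finset (Multiset S) := R.image Reaction.prod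

/-- Sum of the kinetic parameters of all reactions with reagents `ρ` and products `π`. -/
def rrOff (R : Finset (Reaction S)) (ρ π : Multiset S) : ℝ :=
  ∑ x ∈ R.filter (fun x => x.reag = ρ ∧ x.prod = π), x.rate

/-- The reaction rate `rr(ρ,π)`: the sum of the kinetic parameters of the reactions from
`ρ` to `π` when `ρ ≠ π`, with diagonal correction `rr(ρ,ρ) = -∑_{π' ∈ Prod(R), π' ≠ ρ} rr(ρ,π')`. -/
def rr (R : Finset (Reaction S)) (ρ π : Multiset S) : ℝ :=
  if ρ = π then -∑ π' ∈ (Prods R).erase ρ, rrOff R ρ π'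
  else rrOff R ρ π

/-- Cumulative reaction rate `rr[ρ,B] = ∑_{π ∈ B ∩ (Prod(R) ∪ {ρ})} rr(ρ,π)`. -/
def rrSet (R : Finset (Reaction S)) (ρ : Multiset S) (B : Set (Multiset S)) : ℝ :=
  ∑ π ∈ (insert ρ (Prods R)).filter (· ∈ B), rr R ρ π

/-- Mass-action propensity of a reaction in state `σ`. -/
def propensity (σ : Multiset S) (x : Reaction S) : ℝ :=
  x.rate * ∏ s ∈ x.reag.toFinset, ((σ.count s).choose (x.reag.count s) : ℝ)

/-- Sum of the propensities in `σ` of all reactions leading from state `σ` to state `θ`. -/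
def qOff (R : Finset (Reaction S)) (σ θ : Multiset S) : ℝ :=
  ∑ x ∈ R.filter (fun x => x.reag ≤ σ ∧ σ - x.reag + x.prod = θ), propensity σ x

/-- The (finitely many) states reachable from `σ` in one reaction. -/
def succs (R : Finset (Reaction S)) (σ : Multiset S) : Finset (Multiset S) :=
  (R.filter (fun x => x.reag ≤ σ)).image (fun x => σ - x.reag + x.prod)

/-- CTMC transition rate `q(σ,θ)` of the Markov chain of the network, with the
convention `q(σ,σ) = -∑_{θ ≠ σ} q(σ,θ)`. -/
def q (R : Finset (Reaction S)) (σ θ : Multiset S) : ℝ :=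
  if σ = θ then -∑ θ' ∈ (succs R σ).erase σ, qOff R σ θ'
  else qOff R σ θ

/-- Aggregate transition rate `q[σ,B] = ∑_{θ ∈ B} q(σ,θ)` (finitely many nonzero terms). -/
def qSet (R : Finset (Reaction S)) (σ : Multiset S) (B : Set (Multiset S)) : ℝ :=
  ∑ θ ∈ (insert σ (succs R σ)).filter (· ∈ B), q R σ θ

/-- All kinetic parameters of the network are positive. -/
def posRates (R : Finset (Reaction S)) : Prop := ∀ x ∈ R, 0 < x.rate

/-- Species equivalence (SE): for all related species `s ≈ s'`, every context `ρ` with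
`s+ρ` or `s'+ρ` a reagent multiset of `R`, and every ≈ₗ-class containing at least one
product multiset (represented by `π₀ ∈ Prod(R)`), the cumulative reaction rates agree. -/
def isSE (sd : Setoid S) (R : Finset (Reaction S)) : Prop :=
  ∀ s s' : S, sd.r s s' → ∀ ρ : Multiset S,
    ((s ::ₘ ρ) ∈ Reags R ∨ (s' ::ₘ ρ) ∈ Reags R) →
    ∀ π₀ ∈ Prods R,
      rrSet R (s ::ₘ ρ) {π | mlift sd π₀ π} = rrSet R (s' ::ₘ ρ) {π | mlift sd π₀ π}

/-- `f` is a representative map for the equivalence `sd`. -/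
def IsRep (sd : Setoid S) (f : S → S) : Prop :=
  (∀ s : S, sd.r (f s) s) ∧ ∀ s s' : S, sd.r s s' → f s = f s'

/-- The reduced reaction network of `R` by the representative map `f`: one reaction
`(ρ̂, β, π̂)` for each pair `(ρ̂, π̂)` with `ρ̂ ∈ Reag(R)`, `f(ρ̂) = ρ̂`, `f(π̂) = π̂` and
`β = ∑ { α | (ρ̂,α,π) ∈ R, f(π) = π̂ }` positive. -/
def reduced (R : Finset (Reaction S)) (f : S → S) : Finset (Reaction S) :=
  ((((R.image (fun x => (x.reag, x.prod.map f))).filter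
      (fun p => p.1.map f = p.1)).image
    (fun p => (⟨p.1, ∑ x ∈ R.filter (fun x => x.reag = p.1 ∧ x.prod.map f = p.2), x.rate,
      p.2⟩ : Reaction S)))).filter (fun x => 0 < x.rate)

/-- SMB-reaction rate: sum of parameters with no diagonal correction. -/
def rrSMBSet (R : Finset (Reaction S)) (ρ : Multiset S) (B : Set (Multiset S)) : ℝ :=
  ∑ π ∈ (Prods R).filter (· ∈ B), rrOff R ρ π

/-- Syntactic Markovian bisimulation. -/
def isSMB (sd : Setoid S) (R : Finset (Reaction S)) : Prop :=
  ∀ s s' : S, sd.r s s' → ∀ ρ π₀ : Multiset S,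
    rrSMBSet R (s ::ₘ ρ) {π | mlift sd π₀ π} = rrSMBSet R (s' ::ₘ ρ) {π | mlift sd π₀ π}

section AuxSE

variable {S : Type*} (sd : Setoid S)

lemma classCount_cons (s a : S) (σ : Multiset S) :
    classCount sd s (a ::ₘ σ) = (if sd.r s a then 1 else 0) + classCount sd s σ := by
  unfold classCount
  rw [Multiset.filter_cons]
  split <;> simp <;> omega

lemma classCount_add (s : S) (σ ρ : Multiset S) :
    classCount sd s (σ + ρ) = classCount sd s σ + classCount sd s ρ := by
  unfold classCount; rw [Multiset.filter_add, Multiset.card_add]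

lemma classCount_sub (s : S) {σ ρ : Multiset S} (h : ρ ≤ σ) :
    classCount sd s (σ - ρ) = classCount sd s σ - classCount sd s ρ := by
  have h1 : σ - ρ + ρ = σ := tsub_add_cancel_of_le h
  have h2 := classCount_add sd s (σ - ρ) ρ
  rw [h1] at h2
  omega

lemma mlift_refl (σ : Multiset S) : mlift sd σ σ := fun _ => rfl

lemma mlift_symm {σ σ' : Multiset S} (h : mlift sd σ σ') : mlift sd σ' σ :=
  fun s => (h s).symm

lemma mlift_trans {σ σ' σ'' : Multiset S} (h : mlift sd σ σ') (h' : mlift sd σ' σ'') :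
    mlift sd σ σ'' := fun s => (h s).trans (h' s)

lemma mlift_cons_of_r {a b : S} (h : sd.r a b) (σ : Multiset S) :
    mlift sd (a ::ₘ σ) (b ::ₘ σ) := by
  intro t
  rw [classCount_cons, classCount_cons]
  have hiff : sd.r t a ↔ sd.r t b := ⟨fun h' => sd.trans h' h, fun h' => sd.trans h' (sd.symm h)⟩
  congr 1
  simp only [hiff]

lemma mlift_add {σ σ' ρ ρ' : Multiset S} (h : mlift sd σ σ') (h' : mlift sd ρ ρ') :
    mlift sd (σ + ρ) (σ' + ρ') := by
  intro t; rw [classCount_add, classCount_add, h t, h' t]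

lemma mlift_cons {σ σ' : Multiset S} (a : S) (h : mlift sd σ σ') :
    mlift sd (a ::ₘ σ) (a ::ₘ σ') := by
  intro t; rw [classCount_cons, classCount_cons, h t]

lemma mlift_sub {σ σ' ρ ρ' : Multiset S} (hρ : ρ ≤ σ) (hρ' : ρ' ≤ σ')
    (h : mlift sd σ σ') (h' : mlift sd ρ ρ') : mlift sd (σ - ρ) (σ' - ρ') := by
  intro t
  rw [classCount_sub sd t hρ, classCount_sub sd t hρ', h t, h' t]

lemma mlift_cancel {δ π π' : Multiset S} (h : mlift sd (δ + π) (δ + π')) :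
    mlift sd π π' := by
  intro t
  have := h t
  rw [classCount_add, classCount_add] at this
  omega

lemma classCount_pos_of_mem {t : S} {σ : Multiset S} (h : t ∈ σ) :
    0 < classCount sd t σ := by
  unfold classCount
  rw [Multiset.card_pos]
  intro hc
  have : t ∈ Multiset.filter (sd.r t) σ := Multiset.mem_filter.2 ⟨h, sd.refl t⟩
  rw [hc] at this
  exact absurd this (Multiset.notMem_zero t)

lemma eq_of_le_of_mlift {ρ σ : Multiset S} (hle : ρ ≤ σ) (hm : mlift sd ρ σ) : ρ = σ := by
  have h0 : σ - ρ = 0 := by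
    by_contra hne
    obtain ⟨t, ht⟩ := Multiset.exists_mem_of_ne_zero hne
    have h1 : classCount sd t (σ - ρ) + classCount sd t ρ = classCount sd t σ := by
      rw [← classCount_add, tsub_add_cancel_of_le hle]
    have h2 := classCount_pos_of_mem sd ht
    have h3 := hm t
    omega
  have : σ ≤ ρ := tsub_eq_zero_iff_le.1 h0
  exact le_antisymm hle this

lemma mlift_zero {σ : Multiset S} (h : mlift sd 0 σ) : σ = 0 := by
  by_contra hne
  obtain ⟨t, ht⟩ := Multiset.exists_mem_of_ne_zero hne
  have h2 := classCount_pos_of_mem sd ht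
  have h0 : classCount sd t (0 : Multiset S) = 0 := by simp [classCount]
  have h3 := h t
  omega

/-- Single replacement of one species by an equivalent one. -/
def SwapStep (σ σ' : Multiset S) : Prop :=
  ∃ a b γ, sd.r a b ∧ σ = a ::ₘ γ ∧ σ' = b ::ₘ γ

lemma SwapStep.mlift' {σ σ' : Multiset S} (h : SwapStep sd σ σ') : mlift sd σ σ' := by
  obtain ⟨a, b, γ, hab, rfl, rfl⟩ := h
  exact mlift_cons_of_r sd hab γ

lemma SwapStep.card_eq {σ σ' : Multiset S} (h : SwapStep sd σ σ') :
    Multiset.card σ = Multiset.card σ' := by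
  obtain ⟨a, b, γ, hab, rfl, rfl⟩ := h
  simp

lemma SwapStep.cons {σ σ' : Multiset S} (a : S) (h : SwapStep sd σ σ') :
    SwapStep sd (a ::ₘ σ) (a ::ₘ σ') := by
  obtain ⟨u, v, γ, huv, rfl, rfl⟩ := h
  exact ⟨u, v, a ::ₘ γ, huv, Multiset.cons_swap a u γ, Multiset.cons_swap a v γ⟩

lemma mlift_chain : ∀ (σ σ' : Multiset S), mlift sd σ σ' →
    Relation.ReflTransGen (SwapStep sd) σ σ' := by
  intro σ
  induction σ using Multiset.induction with
  | empty =>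
    intro σ' h
    rw [mlift_zero sd h]
  | cons s σ₂ IH =>
    intro σ' h
    have hs : ∃ s'' ∈ σ', sd.r s s'' := by
      have h1 := h s
      have hp : 0 < classCount sd s (s ::ₘ σ₂) :=
        classCount_pos_of_mem sd (Multiset.mem_cons_self s σ₂)
      have h2 : 0 < classCount sd s σ' := by omega
      rw [classCount, Multiset.card_pos] at h2
      obtain ⟨t, ht⟩ := Multiset.exists_mem_of_ne_zero h2
      have := Multiset.mem_filter.1 ht
      exact ⟨t, this.1, this.2⟩
    obtain ⟨s'', hmem, hr⟩ := hs
    have hσ' : σ' = s'' ::ₘ σ'.erase s'' := (Multiset.cons_erase hmem).symm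
    have h2 : mlift sd σ₂ (σ'.erase s'') := by
      intro t
      have h3 := h t
      rw [hσ', classCount_cons, classCount_cons] at h3
      have hiff : sd.r t s ↔ sd.r t s'' :=
        ⟨fun h' => sd.trans h' hr, fun h' => sd.trans h' (sd.symm hr)⟩
      by_cases hts : sd.r t s
      · rw [if_pos hts, if_pos (hiff.1 hts)] at h3; omega
      · rw [if_neg hts, if_neg (fun hc => hts (hiff.2 hc))] at h3; omega
    have c1 : Relation.ReflTransGen (SwapStep sd) (s ::ₘ σ₂) (s ::ₘ σ'.erase s'') :=
      Relation.ReflTransGen.lift (fun γ => s ::ₘ γ) (fun _ _ hab => hab.cons sd s) _ _ (IH _ h2)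
    have c2 : SwapStep sd (s ::ₘ σ'.erase s'') (s'' ::ₘ σ'.erase s'') :=
      ⟨s, s'', σ'.erase s'', hr, rfl, rfl⟩
    rw [hσ']
    exact c1.tail c2

end AuxSE

section AuxCP

variable {S : Type*}

lemma count_powerset (σ : Multiset S) : ∀ t : Multiset S,
    σ.powerset.count t = ∏ a ∈ t.toFinset, (σ.count a).choose (t.count a) := by
  induction σ using Multiset.induction with
  | empty =>
    intro t
    rw [Multiset.powerset_zero, Multiset.count_singleton]
    by_cases ht : t = 0
    · subst ht; simp
    · rw [if_neg ht]
      obtain ⟨a, ha⟩ := Multiset.exists_mem_of_ne_zero ht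
      symm
      apply Finset.prod_eq_zero (Multiset.mem_toFinset.2 ha)
      have h1 : Multiset.count a (0 : Multiset S) = 0 := Multiset.count_zero a
      rw [h1]
      exact Nat.choose_eq_zero_of_lt (Multiset.count_pos.2 ha)
  | cons a σ IH =>
    intro t
    rw [Multiset.powerset_cons, Multiset.count_add]
    by_cases hat : a ∈ t
    · have hinj : Function.Injective (fun u : Multiset S => a ::ₘ u) := by
        intro u v huv
        have := congrArg (fun m : Multiset S => m.erase a) huv
        simpa [Multiset.erase_cons_head] using this
      have ht' : a ::ₘ t.erase a = t := Multiset.cons_erase hat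
      have hcmap : (Multiset.map (fun u => a ::ₘ u) σ.powerset).count t
          = σ.powerset.count (t.erase a) := by
        conv_lhs => rw [← ht']
        exact Multiset.count_map_eq_count' _ _ hinj _
      rw [hcmap, IH, IH]
      -- reduce to Pascal at `a`
      have hmem : a ∈ t.toFinset := Multiset.mem_toFinset.2 hat
      have hpos : 0 < t.count a := Multiset.count_pos.2 hat
      -- second product over t.toFinset
      have hsub : (t.erase a).toFinset ⊆ t.toFinset := by
        intro b hb
        exact Multiset.mem_toFinset.2 (Multiset.mem_of_mem_erase (Multiset.mem_toFinset.1 hb))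
      have h2 : ∏ b ∈ (t.erase a).toFinset, (σ.count b).choose ((t.erase a).count b)
          = ∏ b ∈ t.toFinset, (σ.count b).choose ((t.erase a).count b) := by
        apply Finset.prod_subset hsub
        intro b _ hb
        have : (t.erase a).count b = 0 :=
          Multiset.count_eq_zero.2 (fun hc => hb (Multiset.mem_toFinset.2 hc))
        rw [this, Nat.choose_zero_right]
      rw [h2]
      rw [← Finset.mul_prod_erase _ _ hmem, ← Finset.mul_prod_erase _ _ hmem,
        ← Finset.mul_prod_erase _ _ hmem]
      have hrest1 : ∏ b ∈ t.toFinset.erase a, (σ.count b).choose ((t.erase a).count b)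
          = ∏ b ∈ t.toFinset.erase a, (σ.count b).choose (t.count b) := by
        apply Finset.prod_congr rfl
        intro b hb
        rw [Multiset.count_erase_of_ne (Finset.ne_of_mem_erase hb)]
      have hrest2 : ∏ b ∈ t.toFinset.erase a, ((a ::ₘ σ).count b).choose (t.count b)
          = ∏ b ∈ t.toFinset.erase a, (σ.count b).choose (t.count b) := by
        apply Finset.prod_congr rfl
        intro b hb
        rw [Multiset.count_cons_of_ne (Finset.ne_of_mem_erase hb)]
      rw [hrest1, hrest2, Multiset.count_erase_self, Multiset.count_cons_self]
      rw [← add_mul]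
      congr 1
      -- Pascal: C(n,k) + C(n,k-1) = C(n+1,k), for k ≥ 1
      obtain ⟨m, hm⟩ : ∃ m, t.count a = m + 1 := ⟨t.count a - 1, by omega⟩
      rw [hm]
      simp only [Nat.add_sub_cancel]
      rw [Nat.choose_succ_succ (σ.count a) m]
      simp only [Nat.succ_eq_add_one]
      omega
    · have hcmap : (Multiset.map (fun u => a ::ₘ u) σ.powerset).count t = 0 := by
        rw [Multiset.count_eq_zero]
        intro hmem
        obtain ⟨u, _, hu⟩ := Multiset.mem_map.1 hmem
        exact hat (hu ▸ Multiset.mem_cons_self a u)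
      rw [hcmap, IH, add_zero]
      apply Finset.prod_congr rfl
      intro b hb
      have hba : b ≠ a := fun hc => hat (hc ▸ Multiset.mem_toFinset.1 hb)
      rw [Multiset.count_cons_of_ne hba]

end AuxCP

section AuxCore

variable {S : Type*} (sd : Setoid S) (R : Finset (Reaction S))

/-- Cumulative rate from reagent `ρ` into the lifted class of `τ₀`. -/
def Bsum (ρ τ₀ : Multiset S) : ℝ :=
  ∑ x ∈ R.filter (fun x => x.reag = ρ ∧ mlift sd x.prod τ₀), x.rate

/-- Cumulative rate from reagent `ρ` into the class of `τ` shifted by context `δ`. -/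
def SumA (ρ δ τ : Multiset S) : ℝ :=
  ∑ x ∈ R.filter (fun x => x.reag = ρ ∧ mlift sd (δ + x.prod) τ), x.rate

/-- Aggregate propensity flow from state `σ` into the lifted class of `τ`. -/
def Gsum (σ τ : Multiset S) : ℝ :=
  ∑ x ∈ R.filter (fun x => x.reag ≤ σ ∧ mlift sd (σ - x.reag + x.prod) τ), propensity σ x

/-- Aggregate propensity flow restricted to proper sub-reagents. -/
def RestS (σ τ : Multiset S) : ℝ :=
  ∑ x ∈ R.filter (fun x => x.reag ≤ σ ∧ ¬ mlift sd x.reag σ ∧ mlift sd (σ - x.reag + x.prod) τ),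
    propensity σ x

/-- Summand function used for the powerset decomposition of `RestS`. -/
def fS (σ τ ρm : Multiset S) : ℝ := if mlift sd ρm σ then 0 else SumA sd R ρm (σ - ρm) τ

lemma SumA_congr_delta {δ δ' : Multiset S} (ρ τ : Multiset S) (h : mlift sd δ δ') :
    SumA sd R ρ δ τ = SumA sd R ρ δ' τ := by
  unfold SumA
  apply Finset.sum_congr _ (fun _ _ => rfl)
  apply Finset.filter_congr
  intro x _
  refine and_congr_right (fun _ => ⟨fun h1 => ?_, fun h1 => ?_⟩)
  · exact mlift_trans sd (mlift_add sd (mlift_symm sd h) (mlift_refl sd _)) h1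
  · exact mlift_trans sd (mlift_add sd h (mlift_refl sd _)) h1

lemma qSet_eq_Gsum (σ τ : Multiset S) (hστ : ¬ mlift sd σ τ) :
    qSet R σ {θ | mlift sd θ τ} = Gsum sd R σ τ := by
  unfold qSet Gsum
  have hσB : ¬ ((σ : Multiset S) ∈ {θ | mlift sd θ τ}) := hστ
  rw [Finset.filter_insert, if_neg hσB]
  have h1 : ∀ θ ∈ (succs R σ).filter (· ∈ {θ | mlift sd θ τ}), q R σ θ = qOff R σ θ := by
    intro θ hθ
    have hθB : mlift sd θ τ := (Finset.mem_filter.1 hθ).2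
    have hne : σ ≠ θ := fun hc => hστ (by rw [hc]; exact hθB)
    unfold q
    rw [if_neg hne]
  rw [Finset.sum_congr rfl h1]
  unfold qOff
  have h2 : ∀ θ ∈ (succs R σ).filter (· ∈ {θ | mlift sd θ τ}),
      R.filter (fun x => x.reag ≤ σ ∧ σ - x.reag + x.prod = θ)
        = (R.filter (fun x => x.reag ≤ σ ∧ mlift sd (σ - x.reag + x.prod) τ)).filter
            (fun x => σ - x.reag + x.prod = θ) := by
    intro θ hθ
    have hθB : mlift sd θ τ := (Finset.mem_filter.1 hθ).2
    ext x
    simp only [Finset.mem_filter]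
    constructor
    · rintro ⟨hx, hle, he⟩
      exact ⟨⟨hx, hle, by rw [he]; exact hθB⟩, he⟩
    · rintro ⟨⟨hx, hle, _⟩, he⟩
      exact ⟨hx, hle, he⟩
  rw [Finset.sum_congr rfl (fun θ hθ => by rw [h2 θ hθ])]
  apply Finset.sum_fiberwise_of_maps_to
  intro x hx
  rw [Finset.mem_filter] at hx ⊢
  refine ⟨?_, hx.2.2⟩
  unfold succs
  exact Finset.mem_image.2 ⟨x, Finset.mem_filter.2 ⟨hx.1, hx.2.1⟩, rfl⟩

lemma choose_prod_self (σ : Multiset S) :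
    ∏ s ∈ σ.toFinset, ((σ.count s).choose (σ.count s) : ℝ) = 1 :=
  Finset.prod_eq_one (fun x _ => by rw [Nat.choose_self]; norm_num)

lemma Gsum_split (σ τ : Multiset S) :
    Gsum sd R σ τ = Bsum sd R σ τ + RestS sd R σ τ := by
  unfold Gsum
  rw [← Finset.sum_filter_add_sum_filter_not
    (R.filter (fun x => x.reag ≤ σ ∧ mlift sd (σ - x.reag + x.prod) τ))
    (fun x => mlift sd x.reag σ)]
  congr 1
  · rw [Finset.filter_filter]
    have hset : R.filter
        (fun x => (x.reag ≤ σ ∧ mlift sd (σ - x.reag + x.prod) τ) ∧ mlift sd x.reag σ)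
        = R.filter (fun x => x.reag = σ ∧ mlift sd x.prod τ) := by
      ext x
      simp only [Finset.mem_filter]
      constructor
      · rintro ⟨hx, ⟨hle, hml⟩, hms⟩
        have he : x.reag = σ := eq_of_le_of_mlift sd hle hms
        refine ⟨hx, he, ?_⟩
        rwa [he, tsub_self, zero_add] at hml
      · rintro ⟨hx, he, hml⟩
        refine ⟨hx, ⟨le_of_eq he, ?_⟩, by rw [he]; exact mlift_refl sd σ⟩
        rwa [he, tsub_self, zero_add]
    rw [hset]
    unfold Bsum
    apply Finset.sum_congr rfl
    intro x hx
    have he : x.reag = σ := (Finset.mem_filter.1 hx).2.1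
    unfold propensity
    rw [he, choose_prod_self, mul_one]
  · rw [Finset.filter_filter]
    unfold RestS
    apply Finset.sum_congr _ (fun _ _ => rfl)
    apply Finset.filter_congr
    intro x _
    tauto

lemma Rest_eq (σ τ : Multiset S) :
    RestS sd R σ τ = (σ.powerset.map (fS sd R σ τ)).sum := by
  unfold RestS
  set t := σ.powerset.toFinset.filter (fun m => ¬ mlift sd m σ) with ht
  set s := R.filter
    (fun x => x.reag ≤ σ ∧ ¬ mlift sd x.reag σ ∧ mlift sd (σ - x.reag + x.prod) τ) with hsdef
  have hmaps : ∀ x ∈ s, x.reag ∈ t := by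
    intro x hx
    rw [hsdef, Finset.mem_filter] at hx
    rw [ht, Finset.mem_filter]
    exact ⟨Multiset.mem_toFinset.2 (Multiset.mem_powerset.2 hx.2.1), hx.2.2.1⟩
  have hfib : ∑ m ∈ t, ∑ x ∈ s.filter (fun x => x.reag = m), propensity σ x
      = ∑ x ∈ s, propensity σ x := Finset.sum_fiberwise_of_maps_to hmaps _
  have hinner : ∀ m ∈ t, (∑ x ∈ s.filter (fun x => x.reag = m), propensity σ x)
      = (σ.powerset.count m : ℝ) * SumA sd R m (σ - m) τ := by
    intro m hm
    rw [ht, Finset.mem_filter] at hm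
    have hmle : m ≤ σ := Multiset.mem_powerset.1 (Multiset.mem_toFinset.1 hm.1)
    have hset : s.filter (fun x => x.reag = m)
        = R.filter (fun x => x.reag = m ∧ mlift sd ((σ - m) + x.prod) τ) := by
      rw [hsdef]
      ext x
      simp only [Finset.mem_filter]
      constructor
      · rintro ⟨⟨hx, _, _, hml⟩, he⟩
        exact ⟨hx, he, by rwa [he] at hml⟩
      · rintro ⟨hx, he, hml⟩
        refine ⟨⟨hx, by rw [he]; exact hmle, by rw [he]; exact hm.2, by rwa [he]⟩, he⟩
    rw [hset]
    unfold SumA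
    rw [Finset.mul_sum]
    apply Finset.sum_congr rfl
    intro x hx
    have he : x.reag = m := (Finset.mem_filter.1 hx).2.1
    unfold propensity
    rw [he, count_powerset]
    push_cast
    ring
  have hrhs : (σ.powerset.map (fS sd R σ τ)).sum
      = ∑ m ∈ t, (σ.powerset.count m : ℝ) * SumA sd R m (σ - m) τ := by
    rw [Finset.sum_multiset_map_count, ht, Finset.sum_filter]
    apply Finset.sum_congr rfl
    intro m _
    unfold fS
    by_cases hm : mlift sd m σ
    · rw [if_pos hm, if_neg (not_not_intro hm), smul_zero]
    · rw [if_neg hm, if_pos hm, nsmul_eq_mul]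
  rw [hrhs, ← hfib]
  exact Finset.sum_congr rfl hinner

end AuxCore

section AuxMain

variable {S : Type*} (sd : Setoid S) (R : Finset (Reaction S))

lemma rtg_mlift {a b : Multiset S} (h : Relation.ReflTransGen (SwapStep sd) a b) :
    mlift sd a b := by
  induction h with
  | refl => exact mlift_refl sd a
  | tail _ hbc ih => exact mlift_trans sd ih (hbc.mlift' sd)

lemma rtg_card {a b : Multiset S} (h : Relation.ReflTransGen (SwapStep sd) a b) :
    Multiset.card a = Multiset.card b := by
  induction h with
  | refl => rfl
  | tail _ hbc ih => exact ih.trans (hbc.card_eq sd)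

lemma main_claim
    (h : ∀ σ σ' τ : Multiset S, mlift sd σ σ' →
      qSet R σ {θ | mlift sd θ τ} = qSet R σ' {θ | mlift sd θ τ}) :
    ∀ (n : ℕ) (ρ : Multiset S), Multiset.card ρ = n → ∀ ρ' τ₀, mlift sd ρ ρ' →
      ¬ mlift sd ρ τ₀ → Bsum sd R ρ τ₀ = Bsum sd R ρ' τ₀ := by
  intro n
  induction n using Nat.strong_induction_on with
  | _ n IH =>
  have pairSumA : ∀ ρ₁ ρ₂ δ τ : Multiset S, Multiset.card ρ₁ < n → mlift sd ρ₁ ρ₂ →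
      ¬ mlift sd (δ + ρ₁) τ → SumA sd R ρ₁ δ τ = SumA sd R ρ₂ δ τ := by
    intro ρ₁ ρ₂ δ τ hcard hml hnml
    by_cases hex : ∃ x ∈ R, mlift sd (δ + x.prod) τ
    · obtain ⟨x₀, hx₀R, hx₀m⟩ := hex
      have key : ∀ ρs : Multiset S, SumA sd R ρs δ τ = Bsum sd R ρs x₀.prod := by
        intro ρs
        unfold SumA Bsum
        apply Finset.sum_congr _ (fun _ _ => rfl)
        apply Finset.filter_congr
        intro x _
        refine and_congr_right (fun _ => ⟨fun h1 => ?_, fun h1 => ?_⟩)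
        · exact mlift_cancel sd (mlift_trans sd h1 (mlift_symm sd hx₀m))
        · exact mlift_trans sd (mlift_add sd (mlift_refl sd δ) h1) hx₀m
      rw [key ρ₁, key ρ₂]
      apply IH (Multiset.card ρ₁) hcard ρ₁ rfl ρ₂ x₀.prod hml
      intro hc
      exact hnml (mlift_trans sd (mlift_add sd (mlift_refl sd δ) hc) hx₀m)
    · push_neg at hex
      unfold SumA
      rw [Finset.filter_false_of_mem, Finset.filter_false_of_mem]
      · intro x hx hc; exact hex x hx hc.2
      · intro x hx hc; exact hex x hx hc.2
  have swapCase : ∀ (s s' : S) (γ τ₀ : Multiset S), sd.r s s' →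
      Multiset.card (s ::ₘ γ) = n → ¬ mlift sd (s ::ₘ γ) τ₀ →
      Bsum sd R (s ::ₘ γ) τ₀ = Bsum sd R (s' ::ₘ γ) τ₀ := by
    intro s s' γ τ₀ hss' hcard hnml
    have hσσ' : mlift sd (s ::ₘ γ) (s' ::ₘ γ) := mlift_cons_of_r sd hss' γ
    have hnml' : ¬ mlift sd (s' ::ₘ γ) τ₀ := fun hc => hnml (mlift_trans sd hσσ' hc)
    have hG : Gsum sd R (s ::ₘ γ) τ₀ = Gsum sd R (s' ::ₘ γ) τ₀ := by
      rw [← qSet_eq_Gsum sd R _ _ hnml, ← qSet_eq_Gsum sd R _ _ hnml']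
      exact h _ _ τ₀ hσσ'
    have hR : RestS sd R (s ::ₘ γ) τ₀ = RestS sd R (s' ::ₘ γ) τ₀ := by
      rw [Rest_eq, Rest_eq, Multiset.powerset_cons, Multiset.powerset_cons,
        Multiset.map_add, Multiset.map_add, Multiset.map_map, Multiset.map_map,
        Multiset.sum_add, Multiset.sum_add]
      congr 1
      · apply congrArg Multiset.sum
        apply Multiset.map_congr rfl
        intro u hu
        have huγ : u ≤ γ := Multiset.mem_powerset.1 hu
        unfold fS
        have hiff : mlift sd u (s ::ₘ γ) ↔ mlift sd u (s' ::ₘ γ) :=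
          ⟨fun h1 => mlift_trans sd h1 hσσ', fun h1 => mlift_trans sd h1 (mlift_symm sd hσσ')⟩
        by_cases hm : mlift sd u (s ::ₘ γ)
        · rw [if_pos hm, if_pos (hiff.1 hm)]
        · rw [if_neg hm, if_neg (fun hc => hm (hiff.2 hc))]
          apply SumA_congr_delta
          exact mlift_sub sd (le_trans huγ (Multiset.le_cons_self γ s))
            (le_trans huγ (Multiset.le_cons_self γ s')) hσσ' (mlift_refl sd u)
      · apply congrArg Multiset.sum
        apply Multiset.map_congr rfl
        intro u hu
        have huγ : u ≤ γ := Multiset.mem_powerset.1 hu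
        simp only [Function.comp_apply]
        unfold fS
        have hml2 : mlift sd (s ::ₘ u) (s' ::ₘ u) := mlift_cons_of_r sd hss' u
        have hiff : mlift sd (s ::ₘ u) (s ::ₘ γ) ↔ mlift sd (s' ::ₘ u) (s' ::ₘ γ) := by
          constructor
          · intro h1
            exact mlift_trans sd (mlift_symm sd hml2) (mlift_trans sd h1 hσσ')
          · intro h1
            exact mlift_trans sd hml2 (mlift_trans sd h1 (mlift_symm sd hσσ'))
        by_cases hm : mlift sd (s ::ₘ u) (s ::ₘ γ)
        · rw [if_pos hm, if_pos (hiff.1 hm)]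
        · rw [if_neg hm, if_neg (fun hc => hm (hiff.2 hc))]
          have hδ1 : (s ::ₘ γ) - (s ::ₘ u) = γ - u := by
            rw [Multiset.sub_cons, Multiset.erase_cons_head]
          have hδ2 : (s' ::ₘ γ) - (s' ::ₘ u) = γ - u := by
            rw [Multiset.sub_cons, Multiset.erase_cons_head]
          rw [hδ1, hδ2]
          apply pairSumA (s ::ₘ u) (s' ::ₘ u) (γ - u) τ₀
          · have hune : u ≠ γ := by
              intro hc
              subst hc
              exact hm (mlift_refl sd _)
            have hlt : Multiset.card u < Multiset.card γ :=
              Multiset.card_lt_card (lt_of_le_of_ne huγ hune)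
            rw [← hcard]
            simp only [Multiset.card_cons]
            omega
          · exact hml2
          · have he : (γ - u) + (s ::ₘ u) = s ::ₘ γ := by
              rw [add_comm, Multiset.cons_add, add_comm u (γ - u), tsub_add_cancel_of_le huγ]
            rw [he]
            exact hnml
    have e1 := Gsum_split sd R (s ::ₘ γ) τ₀
    have e2 := Gsum_split sd R (s' ::ₘ γ) τ₀
    linarith
  intro ρ hcard ρ' τ₀ hml hnml
  have hchain := mlift_chain sd ρ ρ' hml
  clear hml
  induction hchain with
  | refl => rfl
  | @tail b c hab hbc ih =>
    have hmb : mlift sd ρ b := rtg_mlift sd hab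
    have hcb : Multiset.card b = n := by rw [← rtg_card sd hab]; exact hcard
    have hnmlb : ¬ mlift sd b τ₀ := fun hcc => hnml (mlift_trans sd hmb hcc)
    obtain ⟨u, v, γ, huv, hb, hc⟩ := hbc
    rw [ih, hb, hc]
    apply swapCase u v γ τ₀ huv
    · rw [← hb]; exact hcb
    · rw [← hb]; exact hnmlb

end AuxMain

section AuxFinal

variable {S : Type*} (sd : Setoid S) (R : Finset (Reaction S))

lemma rrSet_offdiag (σ π₀ : Multiset S) (hσ : ¬ mlift sd π₀ σ) :
    rrSet R σ {π | mlift sd π₀ π} = Bsum sd R σ π₀ := by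
  unfold rrSet
  have hσB : ¬ (σ ∈ {π | mlift sd π₀ π}) := hσ
  rw [Finset.filter_insert, if_neg hσB]
  have h1 : ∀ π ∈ (Prods R).filter (· ∈ {π | mlift sd π₀ π}), rr R σ π = rrOff R σ π := by
    intro π hπ
    have hπB : mlift sd π₀ π := (Finset.mem_filter.1 hπ).2
    have hne : σ ≠ π := fun hcc => hσ (by rw [hcc]; exact hπB)
    unfold rr
    rw [if_neg hne]
  rw [Finset.sum_congr rfl h1]
  unfold rrOff
  have h2 : ∀ π ∈ (Prods R).filter (· ∈ {π | mlift sd π₀ π}),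
      R.filter (fun x => x.reag = σ ∧ x.prod = π)
        = (R.filter (fun x => x.reag = σ ∧ mlift sd x.prod π₀)).filter
            (fun x => x.prod = π) := by
    intro π hπ
    have hπB : mlift sd π₀ π := (Finset.mem_filter.1 hπ).2
    ext x
    simp only [Finset.mem_filter]
    constructor
    · rintro ⟨hx, hre, hpr⟩
      exact ⟨⟨hx, hre, by rw [hpr]; exact mlift_symm sd hπB⟩, hpr⟩
    · rintro ⟨⟨hx, hre, _⟩, hpr⟩
      exact ⟨hx, hre, hpr⟩
  rw [Finset.sum_congr rfl (fun π hπ => by rw [h2 π hπ])]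
  unfold Bsum
  apply Finset.sum_fiberwise_of_maps_to
  intro x hx
  rw [Finset.mem_filter] at hx
  rw [Finset.mem_filter]
  refine ⟨Finset.mem_image.2 ⟨x, hx.1, rfl⟩, ?_⟩
  exact mlift_symm sd hx.2.2

lemma rrSet_diag (σ π₀ : Multiset S) (hσ : mlift sd π₀ σ) :
    rrSet R σ {π | mlift sd π₀ π}
      = -∑ x ∈ R.filter (fun x => x.reag = σ ∧ ¬ mlift sd π₀ x.prod), x.rate := by
  unfold rrSet
  have hσB : σ ∈ {π | mlift sd π₀ π} := hσ
  rw [Finset.filter_insert, if_pos hσB]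
  set T := (Prods R).filter (· ∈ {π | mlift sd π₀ π}) with hT
  have hins : insert σ T = insert σ (T.erase σ) := by
    ext y
    simp only [Finset.mem_insert, Finset.mem_erase]
    by_cases hy : y = σ <;> tauto
  rw [hins, Finset.sum_insert (Finset.notMem_erase σ T)]
  have h1 : ∀ π ∈ T.erase σ, rr R σ π = rrOff R σ π := by
    intro π hπ
    unfold rr
    rw [if_neg (fun hcc => (Finset.mem_erase.1 hπ).1 hcc.symm)]
  rw [Finset.sum_congr rfl h1]
  have hrr : rr R σ σ = -∑ π ∈ (Prods R).erase σ, rrOff R σ π := by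
    unfold rr
    rw [if_pos rfl]
  rw [hrr]
  rw [← Finset.sum_filter_add_sum_filter_not ((Prods R).erase σ)
    (· ∈ {π | mlift sd π₀ π})]
  have hT2 : ((Prods R).erase σ).filter (· ∈ {π | mlift sd π₀ π}) = T.erase σ := by
    rw [hT]
    ext y
    simp only [Finset.mem_filter, Finset.mem_erase]
    tauto
  have hT3 : ((Prods R).erase σ).filter (fun π => ¬ (π ∈ {π | mlift sd π₀ π}))
      = (Prods R).filter (fun π => ¬ mlift sd π₀ π) := by
    ext y
    simp only [Finset.mem_filter, Finset.mem_erase, Set.mem_setOf_eq]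
    constructor
    · rintro ⟨⟨_, hy⟩, hn⟩
      exact ⟨hy, hn⟩
    · rintro ⟨hy, hn⟩
      exact ⟨⟨fun hcc => hn (by rw [hcc]; exact hσ), hy⟩, hn⟩
  rw [hT2, hT3]
  have hfib : ∑ π ∈ (Prods R).filter (fun π => ¬ mlift sd π₀ π), rrOff R σ π
      = ∑ x ∈ R.filter (fun x => x.reag = σ ∧ ¬ mlift sd π₀ x.prod), x.rate := by
    unfold rrOff
    have h2 : ∀ π ∈ (Prods R).filter (fun π => ¬ mlift sd π₀ π),
        R.filter (fun x => x.reag = σ ∧ x.prod = π)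
          = (R.filter (fun x => x.reag = σ ∧ ¬ mlift sd π₀ x.prod)).filter
              (fun x => x.prod = π) := by
      intro π hπ
      have hπn : ¬ mlift sd π₀ π := (Finset.mem_filter.1 hπ).2
      ext x
      simp only [Finset.mem_filter]
      constructor
      · rintro ⟨hx, hre, hpr⟩
        exact ⟨⟨hx, hre, by rw [hpr]; exact hπn⟩, hpr⟩
      · rintro ⟨⟨hx, hre, _⟩, hpr⟩
        exact ⟨hx, hre, hpr⟩
    rw [Finset.sum_congr rfl (fun π hπ => by rw [h2 π hπ])]
    apply Finset.sum_fiberwise_of_maps_to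
    intro x hx
    rw [Finset.mem_filter] at hx
    rw [Finset.mem_filter]
    exact ⟨Finset.mem_image.2 ⟨x, hx.1, rfl⟩, hx.2.2⟩
  rw [hfib]
  ring

end AuxFinal


/-- necessity of SE for ordinary lumpability: if the multiset lifting of `sd`
is an ordinarily lumpable partition of the CTMC of `R` on the full state space, then `sd`
is a species equivalence for `R`. -/
theorem lumpable_implies_isSE (sd : Setoid S) (R : Finset (Reaction S)) (hpos : posRates R)
    (h : ∀ σ σ' τ : Multiset S, mlift sd σ σ' →
      qSet R σ {θ | mlift sd θ τ} = qSet R σ' {θ | mlift sd θ τ}) :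
    isSE sd R := by
  intro s s' hss' ρ _ π₀ _
  have claim := main_claim sd R h
  have hσσ' : mlift sd (s ::ₘ ρ) (s' ::ₘ ρ) := mlift_cons_of_r sd hss' ρ
  by_cases hcase : mlift sd π₀ (s ::ₘ ρ)
  · -- diagonal class
    have hpos' : mlift sd π₀ (s' ::ₘ ρ) := mlift_trans sd hcase hσσ'
    rw [rrSet_diag sd R _ π₀ hcase, rrSet_diag sd R _ π₀ hpos', neg_inj]
    letI := mliftSetoid sd
    set W := R.image (fun x => (⟦x.prod⟧ : Quotient (mliftSetoid sd))) with hW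
    have fib : ∀ σ : Multiset S,
        ∑ x ∈ R.filter (fun x => x.reag = σ ∧ ¬ mlift sd π₀ x.prod), x.rate
        = ∑ w ∈ W, ∑ x ∈ (R.filter (fun x => x.reag = σ ∧ ¬ mlift sd π₀ x.prod)).filter
            (fun x => (⟦x.prod⟧ : Quotient (mliftSetoid sd)) = w), x.rate := by
      intro σ
      exact (Finset.sum_fiberwise_of_maps_to
        (fun x hx => Finset.mem_image.2 ⟨x, (Finset.mem_filter.1 hx).1, rfl⟩) _).symm
    rw [fib (s ::ₘ ρ), fib (s' ::ₘ ρ)]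
    apply Finset.sum_congr rfl
    intro w _
    by_cases hwπ : w = (⟦π₀⟧ : Quotient (mliftSetoid sd))
    · subst hwπ
      rw [Finset.filter_false_of_mem, Finset.filter_false_of_mem]
      · intro x hx hq
        have hml : mlift sd x.prod π₀ := Quotient.eq.1 hq
        exact (Finset.mem_filter.1 hx).2.2 (mlift_symm sd hml)
      · intro x hx hq
        have hml : mlift sd x.prod π₀ := Quotient.eq.1 hq
        exact (Finset.mem_filter.1 hx).2.2 (mlift_symm sd hml)
    · have hset : ∀ σ : Multiset S,
          (R.filter (fun x => x.reag = σ ∧ ¬ mlift sd π₀ x.prod)).filter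
              (fun x => (⟦x.prod⟧ : Quotient (mliftSetoid sd)) = w)
            = R.filter (fun x => x.reag = σ ∧ mlift sd x.prod w.out) := by
        intro σ
        ext x
        simp only [Finset.mem_filter]
        constructor
        · rintro ⟨⟨hx, hre, _⟩, hq⟩
          exact ⟨hx, hre, Quotient.mk_eq_iff_out.1 hq⟩
        · rintro ⟨hx, hre, hml⟩
          have hq : (⟦x.prod⟧ : Quotient (mliftSetoid sd)) = w :=
            Quotient.mk_eq_iff_out.2 hml
          refine ⟨⟨hx, hre, ?_⟩, hq⟩
          intro hc
          apply hwπ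
          rw [← hq]
          exact Quotient.sound (mlift_symm sd hc)
      rw [hset (s ::ₘ ρ), hset (s' ::ₘ ρ)]
      have hnm : ¬ mlift sd (s ::ₘ ρ) (Quotient.out w) := by
        intro hc
        apply hwπ
        have h1 : (⟦(s ::ₘ ρ : Multiset S)⟧ : Quotient (mliftSetoid sd)) = w :=
          Quotient.mk_eq_iff_out.2 hc
        rw [← h1]
        exact (Quotient.sound hcase).symm
      exact claim (Multiset.card (s ::ₘ ρ)) _ rfl _ _ hσσ' hnm
  · -- off-diagonal class
    have hcase' : ¬ mlift sd π₀ (s' ::ₘ ρ) :=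
      fun hc => hcase (mlift_trans sd hc (mlift_symm sd hσσ'))
    rw [rrSet_offdiag sd R _ π₀ hcase, rrSet_offdiag sd R _ π₀ hcase']
    exact claim (Multiset.card (s ::ₘ ρ)) _ rfl _ π₀ hσσ'
      (fun hc => hcase (mlift_symm sd hc))


end
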